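/- There exists a constant C > 0, depending only on q₁, q₂, k₁, k₂, such that every twice continuously differentiable y : [0, 1] → ℝ satisfying y'' + q₁ y' + q₂ y = −λ y on [0, 1] with λ ≥ 1, with the Robin boundary conditions y'(0) + k₁ y(0) = 0 and y'(1) + k₂ y(1) = 0, and normalized by ∫₀¹ y(s)² ds = 1, obeys sup_{[0,1]} |y| ≤ C and sup_{[0,1]} |y'| ≤ C √λ. -/

import Mathlib

open Real MeasureTheory intervalIntegral

private lemma aux_amgm (a b : ℝ) : 2 * |a * b| ≤ a ^ 2 + b ^ 2 := by
  rw [abs_mul]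
  nlinarith [sq_nonneg (|a| - |b|), sq_abs a, sq_abs b, abs_nonneg a, abs_nonneg b]

private lemma aux_amgm' (c a b : ℝ) (hc : 0 ≤ c) :
    2 * (c * |a * b|) ≤ c ^ 2 * a ^ 2 + b ^ 2 := by
  rw [abs_mul]
  nlinarith [sq_nonneg (c * |a| - |b|), sq_abs a, sq_abs b, abs_nonneg a, abs_nonneg b,
    mul_nonneg (mul_nonneg hc (abs_nonneg a)) (abs_nonneg b)]

private lemma aux_amgm_beta (a b β : ℝ) (hβ : 0 < β) :
    |2 * (a * b)| ≤ (1/β) * b ^ 2 + β * a ^ 2 := by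
  have key : 2 * (β * |a * b|) ≤ β ^ 2 * a ^ 2 + b ^ 2 := aux_amgm' β a b hβ.le
  have h1 := mul_le_mul_of_nonneg_left key (le_of_lt (one_div_pos.mpr hβ))
  have e1 : (1/β) * (2 * (β * |a * b|)) = 2 * |a * b| := by field_simp
  have e2 : (1/β) * (β ^ 2 * a ^ 2 + b ^ 2) = β * a ^ 2 + (1/β) * b ^ 2 := by
    field_simp
  rw [e1, e2] at h1
  have e3 : |2 * (a * b)| = 2 * |a * b| := by rw [abs_mul]; simp
  rw [e3]
  linarith only [h1]

private lemma aux_Ebound (M₁ M₂ lam p q u v : ℝ) (hM₁0 : 0 ≤ M₁) (hM₂0 : 0 ≤ M₂)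
    (hlam : 1 ≤ lam) (hp : |p| ≤ M₁) (hq : |q| ≤ M₂) :
    |-2 * p * v ^ 2 - 2 * q * (u * v)| ≤ (2 * M₁ + M₂) * (v ^ 2 + lam * u ^ 2) := by
  have hp' := abs_le.mp hp
  have hq' := abs_le.mp hq
  have t1 : 0 ≤ (M₁ + p) * v ^ 2 := mul_nonneg (by linarith) (sq_nonneg _)
  have t2 : 0 ≤ (M₁ - p) * v ^ 2 := mul_nonneg (by linarith) (sq_nonneg _)
  have t3 : 0 ≤ (lam - 1) * (M₂ * u ^ 2) :=
    mul_nonneg (by linarith) (mul_nonneg hM₂0 (sq_nonneg _))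
  have t4 : 0 ≤ M₁ * (lam * u ^ 2) :=
    mul_nonneg hM₁0 (mul_nonneg (by linarith) (sq_nonneg _))
  have hqu : |q * (u * v)| ≤ M₂ * |u * v| := by
    rw [abs_mul]; exact mul_le_mul_of_nonneg_right hq (abs_nonneg _)
  have h5 : 2 * (M₂ * |u * v|) ≤ M₂ * (u ^ 2 + v ^ 2) := by
    have := mul_le_mul_of_nonneg_left (aux_amgm u v) hM₂0
    linarith only [this]
  have h6 := le_abs_self (q * (u * v))
  have h7 := neg_abs_le (q * (u * v))
  rw [abs_le]
  constructor
  · linarith only [t2, t4, h6, hqu, h5, t3]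
  · linarith only [t1, t4, h7, hqu, h5, t3]

private lemma aux_ode (M₁ M₂ lam p q u v : ℝ) (hM₁0 : 0 ≤ M₁)
    (hp : |p| ≤ M₁) (hq : |q| ≤ M₂) :
    -(u * (-lam * u - p * v - q * u)) ≤ (lam + M₁ ^ 2 / 2 + M₂) * u ^ 2 + (1/2) * v ^ 2 := by
  have e : -(u * (-lam * u - p * v - q * u)) = lam * u ^ 2 + p * (u * v) + q * u ^ 2 := by ring
  have h1 : p * (u * v) ≤ M₁ * |u * v| := by
    calc p * (u * v) ≤ |p * (u * v)| := le_abs_self _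
      _ = |p| * |u * v| := abs_mul _ _
      _ ≤ M₁ * |u * v| := mul_le_mul_of_nonneg_right hp (abs_nonneg _)
  have h2 : 2 * (M₁ * |u * v|) ≤ M₁ ^ 2 * u ^ 2 + v ^ 2 := aux_amgm' M₁ u v hM₁0
  have h3 : q * u ^ 2 ≤ M₂ * u ^ 2 :=
    mul_le_mul_of_nonneg_right ((le_abs_self q).trans hq) (sq_nonneg _)
  rw [e]
  linarith only [h1, h2, h3]

theorem eigenfunction_uniform_bounds
    (q₁ q₂ : ℝ → ℝ)
    (hq₁ : ContinuousOn q₁ (Set.Icc 0 1))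
    (hq₂ : ContinuousOn q₂ (Set.Icc 0 1))
    (k₁ k₂ : ℝ) :
    ∃ C > (0:ℝ), ∀ (y : ℝ → ℝ) (lam : ℝ),
      ContDiff ℝ 2 y → 1 ≤ lam →
      (∀ s ∈ Set.Icc (0:ℝ) 1,
        deriv (deriv y) s + q₁ s * deriv y s + q₂ s * y s = -lam * y s) →
      deriv y 0 + k₁ * y 0 = 0 →
      deriv y 1 + k₂ * y 1 = 0 →
      (∫ s in (0:ℝ)..1, y s ^ 2) = 1 →
      (∀ s ∈ Set.Icc (0:ℝ) 1, |y s| ≤ C) ∧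
      (∀ s ∈ Set.Icc (0:ℝ) 1, |deriv y s| ≤ C * Real.sqrt lam) := by
  obtain ⟨m₁, hm₁⟩ := isCompact_Icc.exists_bound_of_continuousOn hq₁
  obtain ⟨m₂, hm₂⟩ := isCompact_Icc.exists_bound_of_continuousOn hq₂
  obtain ⟨M₁, hM₁def⟩ : ∃ x : ℝ, x = max m₁ 0 := ⟨_, rfl⟩
  obtain ⟨M₂, hM₂def⟩ : ∃ x : ℝ, x = max m₂ 0 := ⟨_, rfl⟩
  have hM₁0 : 0 ≤ M₁ := by rw [hM₁def]; exact le_max_right _ _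
  have hM₂0 : 0 ≤ M₂ := by rw [hM₂def]; exact le_max_right _ _
  have hq₁b : ∀ s ∈ Set.Icc (0:ℝ) 1, |q₁ s| ≤ M₁ := by
    intro s hs
    have h := hm₁ s hs
    rw [Real.norm_eq_abs] at h
    rw [hM₁def]
    exact h.trans (le_max_left _ _)
  have hq₂b : ∀ s ∈ Set.Icc (0:ℝ) 1, |q₂ s| ≤ M₂ := by
    intro s hs
    have h := hm₂ s hs
    rw [Real.norm_eq_abs] at h
    rw [hM₂def]
    exact h.trans (le_max_left _ _)
  obtain ⟨L, hLdef⟩ : ∃ x : ℝ, x = |k₁| + |k₂| := ⟨_, rfl⟩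
  have hL0 : 0 ≤ L := by rw [hLdef]; positivity
  obtain ⟨β, hβdef⟩ : ∃ x : ℝ, x = 8 * (L + 1) := ⟨_, rfl⟩
  have hβ : 0 < β := by rw [hβdef]; linarith only [hL0]
  obtain ⟨K, hKdef⟩ : ∃ x : ℝ, x = 2 * M₁ + M₂ := ⟨_, rfl⟩
  have hK0 : 0 ≤ K := by rw [hKdef]; linarith only [hM₁0, hM₂0]
  obtain ⟨C₀, hC₀def⟩ : ∃ x : ℝ, x = L * (1 + β) + M₁ ^ 2 / 2 + M₂ + 1 := ⟨_, rfl⟩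
  have hC₀0 : 0 ≤ C₀ := by
    rw [hC₀def, hβdef]
    linarith only [hL0, mul_nonneg hL0 hL0, hM₂0, sq_nonneg M₁]
  obtain ⟨C₁, hC₁def⟩ : ∃ x : ℝ, x = 5 + 4 * C₀ := ⟨_, rfl⟩
  have hC₁pos0 : (0:ℝ) < C₁ := by rw [hC₁def]; linarith only [hC₀0]
  have hC₁pos : 0 < Real.exp K * C₁ := mul_pos (Real.exp_pos K) hC₁pos0
  refine ⟨Real.sqrt (Real.exp K * C₁), Real.sqrt_pos.mpr hC₁pos, ?_⟩
  intro y lam hy hlam hode hb0 hb1 hnorm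
  have hlam0 : (0:ℝ) < lam := lt_of_lt_of_le one_pos hlam
  -- regularity
  have hy1 : Differentiable ℝ y := hy.differentiable (by norm_num)
  have h2' : ContDiff ℝ ((1:WithTop ℕ∞)+1) y := by norm_num; exact hy
  have hyd : ContDiff ℝ 1 (deriv y) := (contDiff_succ_iff_deriv.mp h2').2.2
  have hy2 : Differentiable ℝ (deriv y) := hyd.differentiable (by norm_num)
  have cy : Continuous y := hy1.continuous
  have cyd : Continuous (deriv y) := hy2.continuous
  have cydd : Continuous (deriv (deriv y)) := hyd.continuous_deriv le_rfl
  -- energy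
  obtain ⟨E, hEdef⟩ : ∃ E : ℝ → ℝ, E = fun s => deriv y s ^ 2 + lam * y s ^ 2 := ⟨_, rfl⟩
  obtain ⟨E', hE'def⟩ : ∃ E' : ℝ → ℝ,
      E' = fun s => 2 * deriv y s * deriv (deriv y) s + lam * (2 * y s * deriv y s) := ⟨_, rfl⟩
  have cE : Continuous E := by
    rw [hEdef]; exact (cyd.pow 2).add (continuous_const.mul (cy.pow 2))
  have hE0 : ∀ s, 0 ≤ E s := by
    intro s
    simp only [hEdef]
    linarith only [sq_nonneg (deriv y s), mul_nonneg hlam0.le (sq_nonneg (y s))]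
  have hE : ∀ s, HasDerivAt E (E' s) s := by
    intro s
    have h1 : HasDerivAt (deriv y) (deriv (deriv y) s) s := (hy2 s).hasDerivAt
    have h0 : HasDerivAt y (deriv y s) s := (hy1 s).hasDerivAt
    have h := (h1.pow 2).add ((h0.pow 2).const_mul lam)
    rw [hEdef, hE'def]
    exact h.congr_deriv (by beta_reduce; push_cast; ring)
  -- derivative bound
  have hE'b : ∀ s ∈ Set.Icc (0:ℝ) 1, |E' s| ≤ K * E s := by
    intro s hs
    have hode' := hode s hs
    have hydd : deriv (deriv y) s = -lam * y s - q₁ s * deriv y s - q₂ s * y s := by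
      linarith only [hode']
    have key : E' s = -2 * q₁ s * deriv y s ^ 2 - 2 * q₂ s * (y s * deriv y s) := by
      simp only [hE'def]; rw [hydd]; ring
    rw [key, hKdef]
    simp only [hEdef]
    exact aux_Ebound M₁ M₂ lam (q₁ s) (q₂ s) (y s) (deriv y s) hM₁0 hM₂0 hlam
      (hq₁b s hs) (hq₂b s hs)
  -- Gronwall comparison
  have hexp : ∀ a : ℝ, ∀ x : ℝ,
      HasDerivAt (fun t => Real.exp (a * t)) (Real.exp (a * x) * a) x := by
    intro a x
    simpa using (((hasDerivAt_id x).const_mul a).exp)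
  have hexp' : ∀ x : ℝ,
      HasDerivAt (fun t => Real.exp (-(K * t))) (Real.exp (-(K * x)) * (-K)) x := by
    intro x
    have h := hexp (-K) x
    simp only [neg_mul] at h
    exact h
  have hgd : ∀ x, HasDerivAt (fun t => E t * Real.exp (K * t))
      (E' x * Real.exp (K * x) + E x * (Real.exp (K * x) * K)) x :=
    fun x => (hE x).mul (hexp K x)
  have hhd : ∀ x, HasDerivAt (fun t => E t * Real.exp (-(K * t)))
      (E' x * Real.exp (-(K * x)) + E x * (Real.exp (-(K * x)) * (-K))) x :=
    fun x => (hE x).mul (hexp' x)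
  have mono : ∀ s ∈ Set.Icc (0:ℝ) 1, ∀ t ∈ Set.Icc (0:ℝ) 1, E s ≤ Real.exp K * E t := by
    have hg : MonotoneOn (fun t => E t * Real.exp (K * t)) (Set.Icc 0 1) := by
      apply monotoneOn_of_deriv_nonneg (convex_Icc 0 1)
      · exact (cE.mul ((continuous_const.mul continuous_id).rexp)).continuousOn
      · intro x _
        exact ((hgd x).differentiableAt).differentiableWithinAt
      · intro x hx
        rw [interior_Icc] at hx
        rw [(hgd x).deriv]
        have hb := abs_le.mp (hE'b x (Set.Ioo_subset_Icc_self hx))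
        have hm := mul_le_mul_of_nonneg_right hb.1 (Real.exp_pos (K * x)).le
        linarith only [hm]
    have hh : AntitoneOn (fun t => E t * Real.exp (-(K * t))) (Set.Icc 0 1) := by
      apply antitoneOn_of_deriv_nonpos (convex_Icc 0 1)
      · exact (cE.mul (((continuous_const.mul continuous_id).neg).rexp)).continuousOn
      · intro x _
        exact ((hhd x).differentiableAt).differentiableWithinAt
      · intro x hx
        rw [interior_Icc] at hx
        rw [(hhd x).deriv]
        have hb := abs_le.mp (hE'b x (Set.Ioo_subset_Icc_self hx))
        have hm := mul_le_mul_of_nonneg_right hb.2 (Real.exp_pos (-(K * x))).le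
        linarith only [hm]
    intro s hs t ht
    rcases le_total t s with h | h
    · have h1 := hh ht hs h
      have e3 : Real.exp (-(K * t)) * Real.exp (K * s) ≤ Real.exp K := by
        rw [← Real.exp_add]
        apply Real.exp_le_exp.mpr
        have a1 : K * s ≤ K * 1 := mul_le_mul_of_nonneg_left hs.2 hK0
        have a2 : 0 ≤ K * t := mul_nonneg hK0 ht.1
        linarith only [a1, a2]
      calc E s = E s * Real.exp (-(K * s)) * Real.exp (K * s) := by
            rw [mul_assoc, ← Real.exp_add, neg_add_cancel, Real.exp_zero, mul_one]
        _ ≤ E t * Real.exp (-(K * t)) * Real.exp (K * s) :=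
            mul_le_mul_of_nonneg_right h1 (Real.exp_pos _).le
        _ = E t * (Real.exp (-(K * t)) * Real.exp (K * s)) := mul_assoc _ _ _
        _ ≤ E t * Real.exp K := mul_le_mul_of_nonneg_left e3 (hE0 t)
        _ = Real.exp K * E t := mul_comm _ _
    · have h1 := hg hs ht h
      have e3 : Real.exp (K * t) * Real.exp (-(K * s)) ≤ Real.exp K := by
        rw [← Real.exp_add]
        apply Real.exp_le_exp.mpr
        have a1 : K * t ≤ K * 1 := mul_le_mul_of_nonneg_left ht.2 hK0
        have a2 : 0 ≤ K * s := mul_nonneg hK0 hs.1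
        linarith only [a1, a2]
      calc E s = E s * Real.exp (K * s) * Real.exp (-(K * s)) := by
            rw [mul_assoc, ← Real.exp_add, add_neg_cancel, Real.exp_zero, mul_one]
        _ ≤ E t * Real.exp (K * t) * Real.exp (-(K * s)) :=
            mul_le_mul_of_nonneg_right h1 (Real.exp_pos _).le
        _ = E t * (Real.exp (K * t) * Real.exp (-(K * s))) := mul_assoc _ _ _
        _ ≤ E t * Real.exp K := mul_le_mul_of_nonneg_left e3 (hE0 t)
        _ = Real.exp K * E t := mul_comm _ _
  -- pointwise bound by the integral of E
  have intE : ∀ s ∈ Set.Icc (0:ℝ) 1, E s ≤ Real.exp K * ∫ t in (0:ℝ)..1, E t := by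
    intro s hs
    have h1 : (∫ _ in (0:ℝ)..1, E s) = E s := by simp
    rw [← h1, ← intervalIntegral.integral_const_mul]
    exact intervalIntegral.integral_mono_on zero_le_one intervalIntegrable_const
      ((continuous_const.mul cE).intervalIntegrable _ _) (fun t ht => mono s hs t ht)
  obtain ⟨D, hDdef⟩ : ∃ x : ℝ, x = ∫ s in (0:ℝ)..1, deriv y s ^ 2 := ⟨_, rfl⟩
  have hD0 : 0 ≤ D := by
    rw [hDdef]
    exact intervalIntegral.integral_nonneg zero_le_one (fun u _ => sq_nonneg _)
  have hEint : (∫ t in (0:ℝ)..1, E t) = D + lam := by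
    have h1 : (∫ t in (0:ℝ)..1, E t)
        = (∫ t in (0:ℝ)..1, deriv y t ^ 2) + ∫ t in (0:ℝ)..1, lam * y t ^ 2 := by
      rw [hEdef]
      exact intervalIntegral.integral_add ((cyd.pow 2).intervalIntegrable _ _)
        ((continuous_const.mul (cy.pow 2)).intervalIntegrable _ _)
    rw [h1, intervalIntegral.integral_const_mul, hnorm, ← hDdef]
    ring
  -- integration by parts
  have hibp : (∫ s in (0:ℝ)..1, y s * deriv (deriv y) s)
      = y 1 * deriv y 1 - y 0 * deriv y 0 - D := by
    have h := intervalIntegral.integral_mul_deriv_eq_deriv_mul (a := (0:ℝ)) (b := (1:ℝ))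
      (u := y) (v := deriv y) (u' := deriv y) (v' := deriv (deriv y))
      (fun x _ => (hy1 x).hasDerivAt) (fun x _ => (hy2 x).hasDerivAt)
      (cyd.intervalIntegrable _ _) (cydd.intervalIntegrable _ _)
    have hDD : (∫ s in (0:ℝ)..1, deriv y s * deriv y s) = D := by
      rw [hDdef]; congr 1; funext s; ring
    rw [hDD] at h
    exact h
  -- bound ∫ -(y y'')
  have hIode : (∫ s in (0:ℝ)..1, -(y s * deriv (deriv y) s))
      ≤ lam + M₁ ^ 2 / 2 + M₂ + D / 2 := by
    have hmono : (∫ s in (0:ℝ)..1, -(y s * deriv (deriv y) s))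
        ≤ ∫ s in (0:ℝ)..1, ((lam + M₁ ^ 2 / 2 + M₂) * y s ^ 2 + (1/2) * deriv y s ^ 2) := by
      apply intervalIntegral.integral_mono_on zero_le_one
        ((cy.fun_mul cydd).fun_neg.intervalIntegrable _ _)
        (((continuous_const.fun_mul (cy.fun_pow 2)).fun_add
          (continuous_const.fun_mul (cyd.fun_pow 2))).intervalIntegrable _ _)
      intro s hs
      have hode' := hode s hs
      have hydd : deriv (deriv y) s = -lam * y s - q₁ s * deriv y s - q₂ s * y s := by
        linarith only [hode']
      rw [hydd]
      exact aux_ode M₁ M₂ lam (q₁ s) (q₂ s) (y s) (deriv y s) hM₁0 (hq₁b s hs) (hq₂b s hs)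
    have heq : (∫ s in (0:ℝ)..1, ((lam + M₁ ^ 2 / 2 + M₂) * y s ^ 2 + (1/2) * deriv y s ^ 2))
        = (lam + M₁ ^ 2 / 2 + M₂) + (1/2) * D := by
      rw [intervalIntegral.integral_add
        ((continuous_const.fun_mul (cy.fun_pow 2)).intervalIntegrable _ _)
        ((continuous_const.fun_mul (cyd.fun_pow 2)).intervalIntegrable _ _),
        intervalIntegral.integral_const_mul, intervalIntegral.integral_const_mul, hnorm, ← hDdef]
      ring
    rw [heq] at hmono
    linarith only [hmono]
  -- J and boundary square bounds
  obtain ⟨J, hJdef⟩ : ∃ x : ℝ, x = ∫ s in (0:ℝ)..1, |2 * (y s * deriv y s)| := ⟨_, rfl⟩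
  have cJint : Continuous fun s => |2 * (y s * deriv y s)| :=
    (continuous_const.mul (cy.mul cyd)).abs
  have hJ0 : 0 ≤ J := by
    rw [hJdef]
    exact intervalIntegral.integral_nonneg zero_le_one (fun u _ => abs_nonneg _)
  have hJb : J ≤ D / β + β := by
    have hmono : J ≤ ∫ s in (0:ℝ)..1, ((1/β) * deriv y s ^ 2 + β * y s ^ 2) := by
      rw [hJdef]
      apply intervalIntegral.integral_mono_on zero_le_one (cJint.intervalIntegrable _ _)
        (((continuous_const.mul (cyd.pow 2)).add
          (continuous_const.mul (cy.pow 2))).intervalIntegrable _ _)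
      intro s _
      exact aux_amgm_beta (y s) (deriv y s) β hβ
    have heq : (∫ s in (0:ℝ)..1, ((1/β) * deriv y s ^ 2 + β * y s ^ 2)) = (1/β) * D + β := by
      rw [intervalIntegral.integral_add
        ((continuous_const.fun_mul (cyd.fun_pow 2)).intervalIntegrable _ _)
        ((continuous_const.fun_mul (cy.fun_pow 2)).intervalIntegrable _ _),
        intervalIntegral.integral_const_mul, intervalIntegral.integral_const_mul, hnorm, ← hDdef]
      ring
    rw [heq] at hmono
    calc J ≤ (1/β) * D + β := hmono
      _ = D / β + β := by ring
  have hsqd : ∀ x : ℝ, HasDerivAt (fun t => y t ^ 2) (2 * (y x * deriv y x)) x := by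
    intro x
    have h0 : HasDerivAt y (deriv y x) x := (hy1 x).hasDerivAt
    have h := h0.pow 2
    exact h.congr_deriv (by push_cast; ring)
  have hftc : ∀ s ∈ Set.Icc (0:ℝ) 1,
      (∫ t in (0:ℝ)..s, 2 * (y t * deriv y t)) = y s ^ 2 - y 0 ^ 2 := by
    intro s _
    exact intervalIntegral.integral_eq_sub_of_hasDerivAt (fun x _ => hsqd x)
      ((continuous_const.mul (cy.mul cyd)).intervalIntegrable _ _)
  have hftc' : ∀ s ∈ Set.Icc (0:ℝ) 1,
      (∫ t in s..(1:ℝ), 2 * (y t * deriv y t)) = y 1 ^ 2 - y s ^ 2 := by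
    intro s _
    exact intervalIntegral.integral_eq_sub_of_hasDerivAt (fun x _ => hsqd x)
      ((continuous_const.mul (cy.mul cyd)).intervalIntegrable _ _)
  have habsJ : ∀ s ∈ Set.Icc (0:ℝ) 1, |∫ t in (0:ℝ)..s, 2 * (y t * deriv y t)| ≤ J := by
    intro s hs
    rw [hJdef]
    calc |∫ t in (0:ℝ)..s, 2 * (y t * deriv y t)|
        ≤ ∫ t in (0:ℝ)..s, |2 * (y t * deriv y t)| :=
          intervalIntegral.abs_integral_le_integral_abs hs.1
      _ ≤ _ := intervalIntegral.integral_mono_interval le_rfl hs.1 hs.2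
          (MeasureTheory.ae_of_all _ (fun x => abs_nonneg _)) (cJint.intervalIntegrable _ _)
  have habsJ' : ∀ s ∈ Set.Icc (0:ℝ) 1, |∫ t in s..(1:ℝ), 2 * (y t * deriv y t)| ≤ J := by
    intro s hs
    rw [hJdef]
    calc |∫ t in s..(1:ℝ), 2 * (y t * deriv y t)|
        ≤ ∫ t in s..(1:ℝ), |2 * (y t * deriv y t)| :=
          intervalIntegral.abs_integral_le_integral_abs hs.2
      _ ≤ _ := intervalIntegral.integral_mono_interval hs.1 hs.2 le_rfl
          (MeasureTheory.ae_of_all _ (fun x => abs_nonneg _)) (cJint.intervalIntegrable _ _)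
  have hy0sq : y 0 ^ 2 ≤ 1 + J := by
    have hpt : ∀ s ∈ Set.Icc (0:ℝ) 1, y 0 ^ 2 ≤ y s ^ 2 + J := by
      intro s hs
      have h1 := hftc s hs
      have h2 := (abs_le.mp (habsJ s hs)).1
      linarith only [h1, h2]
    have h3 : y 0 ^ 2 = ∫ _ in (0:ℝ)..1, y 0 ^ 2 := by simp
    rw [h3]
    calc (∫ _ in (0:ℝ)..1, y 0 ^ 2) ≤ ∫ s in (0:ℝ)..1, (y s ^ 2 + J) :=
        intervalIntegral.integral_mono_on zero_le_one intervalIntegrable_const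
          (((cy.pow 2).add continuous_const).intervalIntegrable _ _) hpt
      _ = 1 + J := by
        rw [intervalIntegral.integral_add ((cy.fun_pow 2).intervalIntegrable _ _)
          intervalIntegrable_const, hnorm]
        simp
  have hy1sq : y 1 ^ 2 ≤ 1 + J := by
    have hpt : ∀ s ∈ Set.Icc (0:ℝ) 1, y 1 ^ 2 ≤ y s ^ 2 + J := by
      intro s hs
      have h1 := hftc' s hs
      have h2 := (abs_le.mp (habsJ' s hs)).2
      linarith only [h1, h2]
    have h3 : y 1 ^ 2 = ∫ _ in (0:ℝ)..1, y 1 ^ 2 := by simp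
    rw [h3]
    calc (∫ _ in (0:ℝ)..1, y 1 ^ 2) ≤ ∫ s in (0:ℝ)..1, (y s ^ 2 + J) :=
        intervalIntegral.integral_mono_on zero_le_one intervalIntegrable_const
          (((cy.pow 2).add continuous_const).intervalIntegrable _ _) hpt
      _ = 1 + J := by
        rw [intervalIntegral.integral_add ((cy.fun_pow 2).intervalIntegrable _ _)
          intervalIntegrable_const, hnorm]
        simp
  -- assemble bound on D
  have hDb : D ≤ 4 * (lam + C₀) := by
    have hneg : (∫ s in (0:ℝ)..1, -(y s * deriv (deriv y) s))
        = -∫ s in (0:ℝ)..1, y s * deriv (deriv y) s := intervalIntegral.integral_neg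
    have h1 : D = y 1 * deriv y 1 - y 0 * deriv y 0
        + ∫ s in (0:ℝ)..1, -(y s * deriv (deriv y) s) := by
      rw [hneg]
      linarith only [hibp]
    have h2 : y 1 * deriv y 1 = -k₂ * y 1 ^ 2 := by
      have : deriv y 1 = -(k₂ * y 1) := by linarith only [hb1]
      rw [this]; ring
    have h3 : y 0 * deriv y 0 = -k₁ * y 0 ^ 2 := by
      have : deriv y 0 = -(k₁ * y 0) := by linarith only [hb0]
      rw [this]; ring
    have h4 : -k₂ * y 1 ^ 2 ≤ |k₂| * (1 + J) := by
      have a1 : -k₂ * y 1 ^ 2 ≤ |k₂| * y 1 ^ 2 :=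
        mul_le_mul_of_nonneg_right (neg_le_abs k₂) (sq_nonneg _)
      have a2 : |k₂| * y 1 ^ 2 ≤ |k₂| * (1 + J) :=
        mul_le_mul_of_nonneg_left hy1sq (abs_nonneg k₂)
      linarith only [a1, a2]
    have h5 : k₁ * y 0 ^ 2 ≤ |k₁| * (1 + J) := by
      have a1 : k₁ * y 0 ^ 2 ≤ |k₁| * y 0 ^ 2 :=
        mul_le_mul_of_nonneg_right (le_abs_self k₁) (sq_nonneg _)
      have a2 : |k₁| * y 0 ^ 2 ≤ |k₁| * (1 + J) :=
        mul_le_mul_of_nonneg_left hy0sq (abs_nonneg k₁)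
      linarith only [a1, a2]
    have c1 : |k₁| * (1 + J) + |k₂| * (1 + J) = L + L * J := by rw [hLdef]; ring
    have h6' : L * J ≤ L * (D / β) + L * β := by
      have h := mul_le_mul_of_nonneg_left hJb hL0
      linarith only [h]
    have h7 : L * (D / β) ≤ D / 4 := by
      have e : L * (D / β) = (L * D) / β := by ring
      rw [e, div_le_iff₀ hβ, hβdef]
      linarith only [mul_nonneg hL0 hD0, hD0]
    have main : D ≤ L + L * (D / β) + L * β + lam + M₁ ^ 2 / 2 + M₂ + D / 2 := by
      linarith only [h1, h2, h3, h4, h5, hIode, c1, h6']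
    rw [hC₀def]
    linarith only [main, h7]
  -- final pointwise energy bound
  have hfin : ∀ s ∈ Set.Icc (0:ℝ) 1, E s ≤ Real.exp K * C₁ * lam := by
    intro s hs
    have h1 := intE s hs
    rw [hEint] at h1
    have t : 0 ≤ C₀ * (lam - 1) := mul_nonneg hC₀0 (by linarith only [hlam])
    have h2 : D + lam ≤ C₁ * lam := by
      rw [hC₁def]
      linarith only [hDb, t, hlam]
    calc E s ≤ Real.exp K * (D + lam) := h1
      _ ≤ Real.exp K * (C₁ * lam) := mul_le_mul_of_nonneg_left h2 (Real.exp_pos K).le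
      _ = Real.exp K * C₁ * lam := by ring
  constructor
  · intro s hs
    have h := hfin s hs
    simp only [hEdef] at h
    have h3 : y s ^ 2 * lam ≤ (Real.exp K * C₁) * lam := by
      linarith only [h, sq_nonneg (deriv y s)]
    have h2 : y s ^ 2 ≤ Real.exp K * C₁ := le_of_mul_le_mul_right h3 hlam0
    calc |y s| = Real.sqrt (y s ^ 2) := (Real.sqrt_sq_eq_abs _).symm
      _ ≤ Real.sqrt (Real.exp K * C₁) := Real.sqrt_le_sqrt h2
  · intro s hs
    have h := hfin s hs
    simp only [hEdef] at h
    have h2 : deriv y s ^ 2 ≤ Real.exp K * C₁ * lam := by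
      linarith only [h, mul_nonneg hlam0.le (sq_nonneg (y s))]
    calc |deriv y s| = Real.sqrt (deriv y s ^ 2) := (Real.sqrt_sq_eq_abs _).symm
      _ ≤ Real.sqrt (Real.exp K * C₁ * lam) := Real.sqrt_le_sqrt h2
      _ = Real.sqrt (Real.exp K * C₁) * Real.sqrt lam := Real.sqrt_mul hC₁pos.le lam
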